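/- Let Σ = {1,…,d}, let p be a probability vector on Σ, let ε > 0, and suppose a ∈ Σ satisfies p(a) > 1/2. Then √(p(a)(1−p(a))) ≤ Σ_{b∈Σ, b≠a} min(√(p(b)), p(b)/√ε) + √ε/4. -/
import Mathlib

open Finset

private lemma sqrt_le_min_add (ε : ℝ) (hε : 0 < ε) (x : ℝ) (hx : 0 ≤ x) :
    Real.sqrt x ≤ min (Real.sqrt x) (x / Real.sqrt ε) + Real.sqrt ε / 4 := by
  have he : 0 < Real.sqrt ε := Real.sqrt_pos.mpr hε
  rcases le_total (Real.sqrt x) (x / Real.sqrt ε) with h | h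
  · rw [min_eq_left h]; linarith
  · rw [min_eq_right h]
    have hsq : Real.sqrt x ^ 2 = x := Real.sq_sqrt hx
    rw [div_add_div _ _ (ne_of_gt he) (by norm_num), le_div_iff₀ (by positivity)]
    nlinarith [sq_nonneg (Real.sqrt x - Real.sqrt ε / 2)]

private lemma min_subadd (ε : ℝ) (hε : 0 < ε) (x y : ℝ) (hx : 0 ≤ x) (hy : 0 ≤ y) :
    min (Real.sqrt (x + y)) ((x + y) / Real.sqrt ε) ≤
      min (Real.sqrt x) (x / Real.sqrt ε) + min (Real.sqrt y) (y / Real.sqrt ε) := by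
  have he : 0 < Real.sqrt ε := Real.sqrt_pos.mpr hε
  have hsx : Real.sqrt x ^ 2 = x := Real.sq_sqrt hx
  have hsy : Real.sqrt y ^ 2 = y := Real.sq_sqrt hy
  have key : ∀ u v : ℝ, 0 ≤ u → 0 ≤ v → Real.sqrt u ≤ u / Real.sqrt ε →
      min (Real.sqrt (u + v)) ((u + v) / Real.sqrt ε) ≤
        Real.sqrt u + v / Real.sqrt ε := by
    intro u v hu hv hmix
    have hsu : Real.sqrt u ^ 2 = u := Real.sq_sqrt hu
    have hsu0 : 0 ≤ Real.sqrt u := Real.sqrt_nonneg u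
    have heu : Real.sqrt ε ≤ Real.sqrt u ∨ u = 0 := by
      rcases eq_or_lt_of_le hu with h0 | h0
      · right; exact h0.symm
      · left
        have : 0 < Real.sqrt u := Real.sqrt_pos.mpr h0
        rw [le_div_iff₀ he] at hmix
        nlinarith
    rcases heu with heu | h0
    · refine le_trans (min_le_left _ _) ?_
      have : Real.sqrt (u + v) ≤ Real.sqrt ((Real.sqrt u + v / Real.sqrt ε) ^ 2) := by
        apply Real.sqrt_le_sqrt
        have h1 : v / Real.sqrt ε * Real.sqrt ε = v := div_mul_cancel₀ v he.ne'
        nlinarith [mul_nonneg (div_nonneg hv he.le) (sub_nonneg.mpr heu),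
          mul_nonneg (div_nonneg hv he.le) hsu0, sq_nonneg (v / Real.sqrt ε), hsu]
      calc Real.sqrt (u + v) ≤ Real.sqrt ((Real.sqrt u + v / Real.sqrt ε) ^ 2) := this
        _ = Real.sqrt u + v / Real.sqrt ε := Real.sqrt_sq (by positivity)
    · subst h0
      simp only [zero_add, Real.sqrt_zero]
      exact min_le_right _ _
  rcases le_total (Real.sqrt x) (x / Real.sqrt ε) with h1 | h1 <;>
    rcases le_total (Real.sqrt y) (y / Real.sqrt ε) with h2 | h2
  · -- both linear-dominated: use sqrt subadditivity
    rw [min_eq_left h1, min_eq_left h2]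
    refine le_trans (min_le_left _ _) ?_
    calc Real.sqrt (x + y) ≤ Real.sqrt ((Real.sqrt x + Real.sqrt y) ^ 2) := by
          apply Real.sqrt_le_sqrt
          nlinarith [mul_nonneg (Real.sqrt_nonneg x) (Real.sqrt_nonneg y)]
      _ = Real.sqrt x + Real.sqrt y := Real.sqrt_sq (by positivity)
  · rw [min_eq_left h1, min_eq_right h2]
    exact key x y hx hy h1
  · rw [min_eq_right h1, min_eq_left h2]
    rw [add_comm x y, add_comm (x / Real.sqrt ε)]
    exact key y x hy hx h2
  · rw [min_eq_right h1, min_eq_right h2]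
    refine le_trans (min_le_right _ _) ?_
    rw [add_div]

private lemma min_sum_le {ι : Type*} (s : Finset ι) (g : ι → ℝ) (ε : ℝ) (hε : 0 < ε)
    (hg : ∀ i ∈ s, 0 ≤ g i) :
    min (Real.sqrt (∑ i ∈ s, g i)) ((∑ i ∈ s, g i) / Real.sqrt ε) ≤
      ∑ i ∈ s, min (Real.sqrt (g i)) (g i / Real.sqrt ε) := by
  induction s using Finset.cons_induction with
  | empty => simp
  | cons i s hi ih =>
    rw [Finset.sum_cons, Finset.sum_cons]
    have h1 : 0 ≤ g i := hg i (Finset.mem_cons_self i s)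
    have h2 : ∀ j ∈ s, 0 ≤ g j := fun j hj => hg j (Finset.mem_cons_of_mem hj)
    have h3 : 0 ≤ ∑ j ∈ s, g j := Finset.sum_nonneg h2
    calc min (Real.sqrt (g i + ∑ j ∈ s, g j)) ((g i + ∑ j ∈ s, g j) / Real.sqrt ε)
        ≤ min (Real.sqrt (g i)) (g i / Real.sqrt ε)
          + min (Real.sqrt (∑ j ∈ s, g j)) ((∑ j ∈ s, g j) / Real.sqrt ε) :=
          min_subadd ε hε _ _ h1 h3
      _ ≤ _ := by gcongr; exact ih h2

open Finset in
/-- If `p` is a probability vector on `Fin d`, `ε > 0` and `p a > 1/2`, then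
`√(p(a)(1−p(a))) ≤ ∑_{b ≠ a} min(√(p b), p b / √ε) + √ε / 4`. -/
theorem sqrt_p_one_sub_p_le {d : ℕ} (p : Fin d → ℝ)
    (hp_nonneg : ∀ b, 0 ≤ p b) (hp_sum : ∑ b, p b = 1)
    (ε : ℝ) (hε : 0 < ε) (a : Fin d) (ha : 1/2 < p a) :
    Real.sqrt (p a * (1 - p a)) ≤
      (∑ b ∈ univ \ {a}, min (Real.sqrt (p b)) (p b / Real.sqrt ε))
        + Real.sqrt ε / 4 := by
  have hsub : {a} ⊆ (univ : Finset (Fin d)) := Finset.subset_univ _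
  have hsplit : ∑ b ∈ univ \ {a}, p b = 1 - p a := by
    have := Finset.sum_sdiff (f := p) hsub
    simp only [Finset.sum_singleton] at this
    rw [hp_sum] at this
    linarith
  have hs : 0 ≤ 1 - p a := by
    rw [← hsplit]; exact Finset.sum_nonneg fun b _ => hp_nonneg b
  have hpa1 : p a ≤ 1 := by linarith
  have step1 : Real.sqrt (p a * (1 - p a)) ≤ Real.sqrt (1 - p a) := by
    apply Real.sqrt_le_sqrt
    nlinarith [hp_nonneg a]
  have step2 := sqrt_le_min_add ε hε (1 - p a) hs
  have step3 : min (Real.sqrt (1 - p a)) ((1 - p a) / Real.sqrt ε) ≤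
      ∑ b ∈ univ \ {a}, min (Real.sqrt (p b)) (p b / Real.sqrt ε) := by
    rw [← hsplit]
    exact min_sum_le _ p ε hε fun b _ => hp_nonneg b
  linarith
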